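/- Let γ ∈ (1/2, 1], C > 0, and let g : [0, ∞) → [0, ∞) be a nonincreasing differentiable function satisfying g(t) ≤ C·(−g'(t))^{γ} for all t ≥ 0. Then ∫₀^∞ (−g'(t))^{1/2} dt < ∞. -/

import Mathlib

open Set MeasureTheory Filter Topology

theorem stmt6 (γ C : ℝ) (hγ : γ ∈ Set.Ioc (1 / 2 : ℝ) 1) (hC : 0 < C)
    (g g' : ℝ → ℝ)
    (hderiv : ∀ t ≥ (0 : ℝ), HasDerivAt g (g' t) t)
    (hnn : ∀ t ≥ (0 : ℝ), 0 ≤ g t)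
    (hmono : AntitoneOn g (Set.Ici 0))
    (hLS : ∀ t ≥ (0 : ℝ), g t ≤ C * (-(g' t)) ^ γ) :
    MeasureTheory.IntegrableOn (fun t => (-(g' t)) ^ ((1 : ℝ) / 2)) (Set.Ici 0) := by
  obtain ⟨hγ1, hγ2⟩ := hγ
  have hγ0 : (0:ℝ) < γ := lt_trans (by norm_num) hγ1
  set δ : ℝ := 1 / (2 * γ) with hδdef
  have hδ0 : 0 < δ := by positivity
  have hδ1 : δ < 1 := by
    rw [hδdef, div_lt_one (by linarith)]; linarith
  set α : ℝ := 1 - δ with hαdef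
  have hα0 : 0 < α := by simp only [hαdef]; linarith
  have hγδ : γ * δ = 1 / 2 := by
    rw [hδdef]; field_simp
  -- g' is nonpositive on [0, ∞)
  have hg'le : ∀ t ≥ (0:ℝ), g' t ≤ 0 := by
    intro t ht
    have hs : Tendsto (slope g t) (𝓝[>] t) (𝓝 (g' t)) :=
      (hasDerivAt_iff_tendsto_slope.1 (hderiv t ht)).mono_left
        (nhdsWithin_mono t (fun x hx => ne_of_gt hx))
    refine le_of_tendsto hs ?_
    filter_upwards [self_mem_nhdsWithin] with s hs'
    have hst : t < s := hs'
    have hgs : g s ≤ g t := hmono ht (le_trans ht hst.le) hst.le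
    rw [slope_def_field]
    exact div_nonpos_of_nonpos_of_nonneg (by linarith) (by linarith)
  -- continuity of g on [0, ∞)
  have hgc : ContinuousOn g (Ici 0) := fun t ht =>
    (hderiv t ht).continuousAt.continuousWithinAt
  -- pointwise key inequality
  have key : ∀ t ≥ (0:ℝ), 0 < g t →
      (-(g' t)) ^ ((1:ℝ)/2) ≤ (C ^ δ / α) * (α * (g t) ^ (α - 1) * (-(g' t))) := by
    intro t ht hgt
    set x := -(g' t) with hxdef
    have hx0 : 0 ≤ x := neg_nonneg.2 (hg'le t ht)
    have hux : g t ≤ C * x ^ γ := hLS t ht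
    have hxpos : 0 < x := by
      rcases hx0.lt_or_eq with h | h
      · exact h
      · exfalso
        rw [← h, Real.zero_rpow (ne_of_gt hγ0), mul_zero] at hux
        linarith
    have h1 : (g t) ^ δ ≤ C ^ δ * x ^ ((1:ℝ)/2) := by
      calc (g t) ^ δ ≤ (C * x ^ γ) ^ δ := Real.rpow_le_rpow (le_of_lt hgt) hux hδ0.le
        _ = C ^ δ * (x ^ γ) ^ δ := Real.mul_rpow hC.le (Real.rpow_nonneg hx0 _)
        _ = C ^ δ * x ^ (γ * δ) := by rw [← Real.rpow_mul hx0]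
        _ = C ^ δ * x ^ ((1:ℝ)/2) := by rw [hγδ]
    have hRHS : (C ^ δ / α) * (α * (g t) ^ (α - 1) * x) = C ^ δ * x * ((g t) ^ δ)⁻¹ := by
      have hα1 : (g t) ^ (α - 1) = ((g t) ^ δ)⁻¹ := by
        rw [show α - 1 = -δ by simp [hαdef], Real.rpow_neg (le_of_lt hgt)]
      rw [hα1]
      field_simp
    rw [hRHS, ← div_eq_mul_inv, le_div_iff₀ (Real.rpow_pos_of_pos hgt δ)]
    calc x ^ ((1:ℝ)/2) * (g t) ^ δ
        ≤ x ^ ((1:ℝ)/2) * (C ^ δ * x ^ ((1:ℝ)/2)) :=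
          mul_le_mul_of_nonneg_left h1 (Real.rpow_nonneg hx0 _)
      _ = C ^ δ * (x ^ ((1:ℝ)/2) * x ^ ((1:ℝ)/2)) := by ring
      _ = C ^ δ * x := by
          rw [← Real.rpow_add hxpos, show (1:ℝ)/2 + 1/2 = 1 by norm_num, Real.rpow_one]
  -- main finite-interval estimate
  have main : ∀ b : ℝ, 0 ≤ b → (∀ t ∈ Ico (0:ℝ) b, 0 < g t) →
      IntegrableOn (fun t => (-(g' t)) ^ ((1:ℝ)/2)) (Ioc 0 b) volume ∧
      (∫ t in Ioc (0:ℝ) b, (-(g' t)) ^ ((1:ℝ)/2)) ≤ (C ^ δ / α) * (g 0) ^ α := by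
    intro b hb hpos
    set ψ : ℝ → ℝ := fun s => α * (g s) ^ (α - 1) * (-(g' s)) with hψdef
    have hFc : ContinuousOn (fun s => -((g s) ^ α)) (Icc 0 b) :=
      ((hgc.mono Icc_subset_Ici_self).rpow_const (fun x _ => Or.inr hα0.le)).neg
    have hFd : ∀ x ∈ Ioo (0:ℝ) b, HasDerivAt (fun s => -((g s) ^ α)) (ψ x) x := by
      intro x hx
      have hx0 : (0:ℝ) ≤ x := hx.1.le
      have hgx : 0 < g x := hpos x ⟨hx0, hx.2⟩
      have hd := ((hderiv x hx0).rpow_const (p := α) (Or.inl (ne_of_gt hgx))).neg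
      refine hd.congr_deriv ?_
      show _ = α * (g x) ^ (α - 1) * (-(g' x))
      ring
    have hψ0 : ∀ x ∈ Ioo (0:ℝ) b, 0 ≤ ψ x := fun x hx =>
      mul_nonneg (mul_nonneg hα0.le (Real.rpow_nonneg (hnn x hx.1.le) _))
        (neg_nonneg.2 (hg'le x hx.1.le))
    have hψint : IntegrableOn ψ (Ioc 0 b) volume :=
      intervalIntegral.integrableOn_deriv_of_nonneg hFc hFd hψ0
    have hψii : IntervalIntegrable ψ volume 0 b :=
      (intervalIntegrable_iff_integrableOn_Ioc_of_le hb).2 hψint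
    have hFTC : ∫ y in (0:ℝ)..b, ψ y = (g 0) ^ α - (g b) ^ α := by
      rw [intervalIntegral.integral_eq_sub_of_hasDeriv_right_of_le hb hFc
        (fun x hx => (hFd x hx).hasDerivWithinAt) hψii]
      ring
    have hψval : (∫ t in Ioc (0:ℝ) b, ψ t) ≤ (g 0) ^ α := by
      rw [← intervalIntegral.integral_of_le hb, hFTC]
      have hgb : 0 ≤ (g b) ^ α := Real.rpow_nonneg (hnn b hb) _
      linarith
    have hne0 : ∀ᵐ t : ℝ, t ≠ b := by
      rw [MeasureTheory.ae_iff]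
      simp only [not_not, setOf_eq_eq_singleton]
      exact measure_singleton b
    have hb' : ∀ᵐ t ∂(volume.restrict (Ioc (0:ℝ) b)),
        (-(g' t)) ^ ((1:ℝ)/2) ≤ (C ^ δ / α) * ψ t := by
      filter_upwards [ae_restrict_mem measurableSet_Ioc, ae_restrict_of_ae hne0] with t ht htb
      have h0t : 0 < t := ht.1
      have htb' : t < b := lt_of_le_of_ne ht.2 htb
      exact key t h0t.le (hpos t ⟨h0t.le, htb'⟩)
    have hmeas : AEStronglyMeasurable (fun t => (-(g' t)) ^ ((1:ℝ)/2))
        (volume.restrict (Ioc (0:ℝ) b)) := by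
      have hm : Measurable fun t : ℝ => (-(deriv g t)) ^ ((1:ℝ)/2) :=
        (Real.continuous_rpow_const (by norm_num)).measurable.comp (measurable_deriv g).neg
      apply hm.aestronglyMeasurable.congr
      filter_upwards [ae_restrict_mem measurableSet_Ioc] with t ht
      rw [(hderiv t ht.1.le).deriv]
    have hint : IntegrableOn (fun t => (-(g' t)) ^ ((1:ℝ)/2)) (Ioc 0 b) volume := by
      apply Integrable.mono' (hψint.const_mul (C ^ δ / α)) hmeas
      filter_upwards [hb', ae_restrict_mem measurableSet_Ioc] with t ht htmem
      rw [Real.norm_of_nonneg (Real.rpow_nonneg (neg_nonneg.2 (hg'le t htmem.1.le)) _)]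
      exact ht
    refine ⟨hint, ?_⟩
    calc (∫ t in Ioc (0:ℝ) b, (-(g' t)) ^ ((1:ℝ)/2))
        ≤ ∫ t in Ioc (0:ℝ) b, (C ^ δ / α) * ψ t :=
          integral_mono_ae hint (hψint.const_mul _) hb'
      _ = (C ^ δ / α) * ∫ t in Ioc (0:ℝ) b, ψ t := integral_const_mul _ _
      _ ≤ (C ^ δ / α) * (g 0) ^ α :=
          mul_le_mul_of_nonneg_left hψval (by positivity)
  by_cases hzero : ∃ t : ℝ, 0 ≤ t ∧ g t = 0
  · -- g vanishes somewhere: it is eventually zero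
    obtain ⟨t₀, ht₀, hgt₀⟩ := hzero
    set S : Set ℝ := {t : ℝ | 0 ≤ t ∧ g t = 0} with hSdef
    have hSne : S.Nonempty := ⟨t₀, ht₀, hgt₀⟩
    have hSbd : BddBelow S := ⟨0, fun x hx => hx.1⟩
    set T := sInf S with hTdef
    have hT0 : 0 ≤ T := le_csInf hSne (fun x hx => hx.1)
    have hgz : ∀ t, T < t → g t = 0 := by
      intro t ht
      obtain ⟨s, hsS, hst⟩ := exists_lt_of_csInf_lt hSne ht
      have h1 : g t ≤ g s := hmono hsS.1 (le_trans hsS.1 hst.le) hst.le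
      have h2 : 0 ≤ g t := hnn t (le_trans hsS.1 hst.le)
      rw [hsS.2] at h1
      linarith
    have hg'z : ∀ t, T < t → g' t = 0 := by
      intro t ht
      have hteq : g =ᶠ[𝓝 t] fun _ => (0:ℝ) := by
        filter_upwards [Ioi_mem_nhds ht] with s hs
        exact hgz s hs
      have h0 : HasDerivAt g 0 t := (hasDerivAt_const t 0).congr_of_eventuallyEq hteq
      exact (hderiv t (le_trans hT0 ht.le)).unique h0
    have htail : IntegrableOn (fun t => (-(g' t)) ^ ((1:ℝ)/2)) (Ioi T) volume := by
      have heq : EqOn (fun t => (-(g' t)) ^ ((1:ℝ)/2)) (fun _ => (0:ℝ)) (Ioi T) := by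
        intro t ht
        simp only [hg'z t ht, neg_zero,
          Real.zero_rpow (show ((1:ℝ)/2) ≠ 0 by norm_num)]
      exact (integrableOn_congr_fun heq measurableSet_Ioi).2 integrableOn_zero
    have hpos : ∀ t ∈ Ico (0:ℝ) T, 0 < g t := by
      rintro t ⟨ht0, htT⟩
      rcases (hnn t ht0).lt_or_eq with h | h
      · exact h
      · exact absurd (csInf_le hSbd ⟨ht0, h.symm⟩) (not_le.2 htT)
    have hhead : IntegrableOn (fun t => (-(g' t)) ^ ((1:ℝ)/2)) (Icc 0 T) volume :=
      (main T hT0 hpos).1.congr_set_ae Ioc_ae_eq_Icc.symm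
    rw [← Icc_union_Ioi_eq_Ici hT0]
    exact hhead.union htail
  · push_neg at hzero
    have hpos : ∀ t, 0 ≤ t → 0 < g t := fun t ht =>
      lt_of_le_of_ne (hnn t ht) (fun h => hzero t ht h.symm)
    have hInt : IntegrableOn (fun t => (-(g' t)) ^ ((1:ℝ)/2)) (Ioi 0) volume := by
      apply MeasureTheory.integrableOn_Ioi_of_intervalIntegral_norm_bounded
        ((C ^ δ / α) * (g 0) ^ α) 0
        (fun i : ℕ => (main i (Nat.cast_nonneg i) (fun t ht => hpos t ht.1)).1)
        tendsto_natCast_atTop_atTop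
      filter_upwards with i
      rw [intervalIntegral.integral_of_le (Nat.cast_nonneg i)]
      calc (∫ t in Ioc (0:ℝ) (i:ℕ), ‖(-(g' t)) ^ ((1:ℝ)/2)‖)
          = ∫ t in Ioc (0:ℝ) (i:ℕ), (-(g' t)) ^ ((1:ℝ)/2) := by
            apply setIntegral_congr_ae measurableSet_Ioc
            filter_upwards with t ht
            exact Real.norm_of_nonneg (Real.rpow_nonneg (neg_nonneg.2 (hg'le t ht.1.le)) _)
        _ ≤ (C ^ δ / α) * (g 0) ^ α :=
            (main i (Nat.cast_nonneg i) (fun t ht => hpos t ht.1)).2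
    exact hInt.congr_set_ae Ioi_ae_eq_Ici.symm
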